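/- Let k ≥ 2 be an integer and let x₀, x₁, x₂, x₃ be i.i.d. random variables uniformly distributed on {1, 2, ..., k}. Then E(|x₁ - x₀| · |x₂ - x₁| · |x₃ - x₂|) = (k - 1)(k + 1)(17k⁴ - 39k² + 24)/(420k³). -/

import Mathlib

open MeasureTheory ProbabilityTheory
open scoped ENNReal

section SumPart
lemma sum_pow_Icc (n : ℕ) (c0 c1 c2 c3 c4 c5 c6 : ℝ) :
    ∑ t ∈ Finset.Icc 1 n, (c0 + c1*(t:ℝ) + c2*(t:ℝ)^2 + c3*(t:ℝ)^3 + c4*(t:ℝ)^4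
      + c5*(t:ℝ)^5 + c6*(t:ℝ)^6)
    = c0*(n:ℝ) + c1*((n:ℝ)^2+n)/2 + c2*(2*(n:ℝ)^3+3*(n:ℝ)^2+n)/6
      + c3*((n:ℝ)^4+2*(n:ℝ)^3+(n:ℝ)^2)/4 + c4*(6*(n:ℝ)^5+15*(n:ℝ)^4+10*(n:ℝ)^3-n)/30
      + c5*(2*(n:ℝ)^6+6*(n:ℝ)^5+5*(n:ℝ)^4-(n:ℝ)^2)/12
      + c6*(6*(n:ℝ)^7+21*(n:ℝ)^6+21*(n:ℝ)^5-7*(n:ℝ)^3+(n:ℝ))/42 := by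
  induction n with
  | zero => simp
  | succ n ih =>
    rw [Finset.sum_Icc_succ_top (Nat.le_add_left 1 n), ih]
    push_cast; ring

lemma sum_split {c k : ℕ} (h2 : c ≤ k) (g : ℕ → ℝ) :
    ∑ b ∈ Finset.Icc 1 k, g b = ∑ b ∈ Finset.Icc 1 c, g b + ∑ b ∈ Finset.Icc (c+1) k, g b := by
  rw [← Finset.Ico_add_one_right_eq_Icc 1 k, ← Finset.Ico_add_one_right_eq_Icc 1 c, ← Finset.Ico_add_one_right_eq_Icc (c+1) k,
    ← Finset.sum_Ico_consecutive g (Nat.le_add_left 1 c) (Nat.add_le_add_right h2 1)]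

lemma Lgen (j : ℕ) {c k : ℕ} (h2 : c ≤ k) :
    ∑ t ∈ Finset.Icc 1 k, |(c:ℝ) - (t:ℝ)| * (t:ℝ)^j
    = (∑ t ∈ Finset.Icc 1 c, ((c:ℝ) * (t:ℝ)^j - (t:ℝ)^(j+1)))
      + ((∑ t ∈ Finset.Icc 1 k, ((t:ℝ)^(j+1) - (c:ℝ) * (t:ℝ)^j))
        - (∑ t ∈ Finset.Icc 1 c, ((t:ℝ)^(j+1) - (c:ℝ) * (t:ℝ)^j))) := by
  have e1 : ∑ t ∈ Finset.Icc 1 c, |(c:ℝ) - (t:ℝ)| * (t:ℝ)^j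
      = ∑ t ∈ Finset.Icc 1 c, ((c:ℝ) * (t:ℝ)^j - (t:ℝ)^(j+1)) := by
    refine Finset.sum_congr rfl fun t ht => ?_
    rw [Finset.mem_Icc] at ht
    have : (t:ℝ) ≤ (c:ℝ) := Nat.cast_le.2 ht.2
    rw [abs_of_nonneg (by linarith)]; ring
  have e2 : ∑ t ∈ Finset.Icc (c+1) k, |(c:ℝ) - (t:ℝ)| * (t:ℝ)^j
      = ∑ t ∈ Finset.Icc (c+1) k, ((t:ℝ)^(j+1) - (c:ℝ) * (t:ℝ)^j) := by
    refine Finset.sum_congr rfl fun t ht => ?_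
    rw [Finset.mem_Icc] at ht
    have : (c:ℝ) + 1 ≤ (t:ℝ) := by exact_mod_cast Nat.cast_le.2 ht.1
    rw [abs_of_nonpos (by linarith)]; ring
  have s1 := sum_split h2 (fun t => |(c:ℝ) - (t:ℝ)| * (t:ℝ)^j)
  have s2 := sum_split h2 (fun t => ((t:ℝ)^(j+1) - (c:ℝ) * (t:ℝ)^j))
  rw [s1, e1, e2]
  linarith [s2]

lemma L0 {c k : ℕ} (h2 : c ≤ k) :
    ∑ t ∈ Finset.Icc 1 k, |(c:ℝ) - (t:ℝ)|
    = (1/2)*(k:ℝ) + (1/2)*(k:ℝ)^2 + (-1)*(c:ℝ) + (-1)*(c:ℝ)*(k:ℝ) + (c:ℝ)^2 := by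
  have h := Lgen 0 h2
  have e1 : ∑ t ∈ Finset.Icc 1 c, ((c:ℝ) * (t:ℝ)^0 - (t:ℝ)^(0+1))
      = ∑ t ∈ Finset.Icc 1 c, (((c:ℝ)) + (-1)*(t:ℝ) + (0)*(t:ℝ)^2 + (0)*(t:ℝ)^3 + (0)*(t:ℝ)^4 + (0)*(t:ℝ)^5 + (0)*(t:ℝ)^6) := Finset.sum_congr rfl fun t _ => by ring
  have e2 : ∑ t ∈ Finset.Icc 1 k, ((t:ℝ)^(0+1) - (c:ℝ) * (t:ℝ)^0)
      = ∑ t ∈ Finset.Icc 1 k, ((-(c:ℝ)) + (1)*(t:ℝ) + (0)*(t:ℝ)^2 + (0)*(t:ℝ)^3 + (0)*(t:ℝ)^4 + (0)*(t:ℝ)^5 + (0)*(t:ℝ)^6) := Finset.sum_congr rfl fun t _ => by ring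
  have e3 : ∑ t ∈ Finset.Icc 1 c, ((t:ℝ)^(0+1) - (c:ℝ) * (t:ℝ)^0)
      = ∑ t ∈ Finset.Icc 1 c, ((-(c:ℝ)) + (1)*(t:ℝ) + (0)*(t:ℝ)^2 + (0)*(t:ℝ)^3 + (0)*(t:ℝ)^4 + (0)*(t:ℝ)^5 + (0)*(t:ℝ)^6) := Finset.sum_congr rfl fun t _ => by ring
  rw [e1, e2, e3, sum_pow_Icc, sum_pow_Icc, sum_pow_Icc] at h
  try simp only [pow_zero, pow_one, mul_one] at h ⊢
  rw [h]; ring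

lemma L1 {c k : ℕ} (h2 : c ≤ k) :
    ∑ t ∈ Finset.Icc 1 k, |(c:ℝ) - (t:ℝ)| * (t:ℝ)
    = (1/6)*(k:ℝ) + (1/2)*(k:ℝ)^2 + (1/3)*(k:ℝ)^3 + (-1/3)*(c:ℝ) + (-1/2)*(c:ℝ)*(k:ℝ) + (-1/2)*(c:ℝ)*(k:ℝ)^2 + (1/3)*(c:ℝ)^3 := by
  have h := Lgen 1 h2
  have e1 : ∑ t ∈ Finset.Icc 1 c, ((c:ℝ) * (t:ℝ)^1 - (t:ℝ)^(1+1))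
      = ∑ t ∈ Finset.Icc 1 c, ((0) + ((c:ℝ))*(t:ℝ) + (-1)*(t:ℝ)^2 + (0)*(t:ℝ)^3 + (0)*(t:ℝ)^4 + (0)*(t:ℝ)^5 + (0)*(t:ℝ)^6) := Finset.sum_congr rfl fun t _ => by ring
  have e2 : ∑ t ∈ Finset.Icc 1 k, ((t:ℝ)^(1+1) - (c:ℝ) * (t:ℝ)^1)
      = ∑ t ∈ Finset.Icc 1 k, ((0) + (-(c:ℝ))*(t:ℝ) + (1)*(t:ℝ)^2 + (0)*(t:ℝ)^3 + (0)*(t:ℝ)^4 + (0)*(t:ℝ)^5 + (0)*(t:ℝ)^6) := Finset.sum_congr rfl fun t _ => by ring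
  have e3 : ∑ t ∈ Finset.Icc 1 c, ((t:ℝ)^(1+1) - (c:ℝ) * (t:ℝ)^1)
      = ∑ t ∈ Finset.Icc 1 c, ((0) + (-(c:ℝ))*(t:ℝ) + (1)*(t:ℝ)^2 + (0)*(t:ℝ)^3 + (0)*(t:ℝ)^4 + (0)*(t:ℝ)^5 + (0)*(t:ℝ)^6) := Finset.sum_congr rfl fun t _ => by ring
  rw [e1, e2, e3, sum_pow_Icc, sum_pow_Icc, sum_pow_Icc] at h
  try simp only [pow_zero, pow_one, mul_one] at h ⊢
  rw [h]; ring

lemma L2 {c k : ℕ} (h2 : c ≤ k) :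
    ∑ t ∈ Finset.Icc 1 k, |(c:ℝ) - (t:ℝ)| * (t:ℝ)^2
    = (1/4)*(k:ℝ)^2 + (1/2)*(k:ℝ)^3 + (1/4)*(k:ℝ)^4 + (-1/6)*(c:ℝ)*(k:ℝ) + (-1/2)*(c:ℝ)*(k:ℝ)^2 + (-1/3)*(c:ℝ)*(k:ℝ)^3 + (-1/6)*(c:ℝ)^2 + (1/6)*(c:ℝ)^4 := by
  have h := Lgen 2 h2
  have e1 : ∑ t ∈ Finset.Icc 1 c, ((c:ℝ) * (t:ℝ)^2 - (t:ℝ)^(2+1))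
      = ∑ t ∈ Finset.Icc 1 c, ((0) + (0)*(t:ℝ) + ((c:ℝ))*(t:ℝ)^2 + (-1)*(t:ℝ)^3 + (0)*(t:ℝ)^4 + (0)*(t:ℝ)^5 + (0)*(t:ℝ)^6) := Finset.sum_congr rfl fun t _ => by ring
  have e2 : ∑ t ∈ Finset.Icc 1 k, ((t:ℝ)^(2+1) - (c:ℝ) * (t:ℝ)^2)
      = ∑ t ∈ Finset.Icc 1 k, ((0) + (0)*(t:ℝ) + (-(c:ℝ))*(t:ℝ)^2 + (1)*(t:ℝ)^3 + (0)*(t:ℝ)^4 + (0)*(t:ℝ)^5 + (0)*(t:ℝ)^6) := Finset.sum_congr rfl fun t _ => by ring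
  have e3 : ∑ t ∈ Finset.Icc 1 c, ((t:ℝ)^(2+1) - (c:ℝ) * (t:ℝ)^2)
      = ∑ t ∈ Finset.Icc 1 c, ((0) + (0)*(t:ℝ) + (-(c:ℝ))*(t:ℝ)^2 + (1)*(t:ℝ)^3 + (0)*(t:ℝ)^4 + (0)*(t:ℝ)^5 + (0)*(t:ℝ)^6) := Finset.sum_congr rfl fun t _ => by ring
  rw [e1, e2, e3, sum_pow_Icc, sum_pow_Icc, sum_pow_Icc] at h
  try simp only [pow_zero, pow_one, mul_one] at h ⊢
  rw [h]; ring

lemma LB {b k : ℕ} (h2 : b ≤ k) :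
    ∑ c ∈ Finset.Icc 1 k, |(b:ℝ) - (c:ℝ)|
        * ((1/2)*(k:ℝ) + (1/2)*(k:ℝ)^2 + (-1)*(c:ℝ) + (-1)*(c:ℝ)*(k:ℝ) + (c:ℝ)^2)
    = (-1/6)*(k:ℝ) + (-1/6)*(k:ℝ)^2 + (1/6)*(k:ℝ)^3 + (1/6)*(k:ℝ)^4 + (1/3)*(b:ℝ)
      + (1/6)*(b:ℝ)*(k:ℝ) + (-1/2)*(b:ℝ)*(k:ℝ)^2 + (-1/3)*(b:ℝ)*(k:ℝ)^3 + (-1/6)*(b:ℝ)^2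
      + (1/2)*(b:ℝ)^2*(k:ℝ) + (1/2)*(b:ℝ)^2*(k:ℝ)^2 + (-1/3)*(b:ℝ)^3 + (-1/3)*(b:ℝ)^3*(k:ℝ)
      + (1/6)*(b:ℝ)^4 := by
  have e : ∑ c ∈ Finset.Icc 1 k, |(b:ℝ) - (c:ℝ)|
        * ((1/2)*(k:ℝ) + (1/2)*(k:ℝ)^2 + (-1)*(c:ℝ) + (-1)*(c:ℝ)*(k:ℝ) + (c:ℝ)^2)
      = ∑ c ∈ Finset.Icc 1 k, (((1/2)*(k:ℝ) + (1/2)*(k:ℝ)^2) * |(b:ℝ) - (c:ℝ)|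
          + (-1 - (k:ℝ)) * (|(b:ℝ) - (c:ℝ)| * (c:ℝ))
          + (|(b:ℝ) - (c:ℝ)| * (c:ℝ)^2)) :=
    Finset.sum_congr rfl fun c _ => by ring
  rw [e, Finset.sum_add_distrib, Finset.sum_add_distrib, ← Finset.mul_sum, ← Finset.mul_sum,
    L0 h2, L1 h2, L2 h2]
  ring

lemma big_sum {k : ℕ} :
    ∑ a ∈ Finset.Icc 1 k, ∑ b ∈ Finset.Icc 1 k, ∑ c ∈ Finset.Icc 1 k, ∑ d ∈ Finset.Icc 1 k,
      |(b:ℝ) - (a:ℝ)| * |(c:ℝ) - (b:ℝ)| * |(d:ℝ) - (c:ℝ)|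
    = (17*(k:ℝ)^7 - 56*(k:ℝ)^5 + 63*(k:ℝ)^3 - 24*(k:ℝ))/420 := by
  rw [Finset.sum_comm]
  have key : ∀ b ∈ Finset.Icc 1 k,
      ∑ a ∈ Finset.Icc 1 k, ∑ c ∈ Finset.Icc 1 k, ∑ d ∈ Finset.Icc 1 k,
        |(b:ℝ) - (a:ℝ)| * |(c:ℝ) - (b:ℝ)| * |(d:ℝ) - (c:ℝ)|
      = ((1/2)*(k:ℝ) + (1/2)*(k:ℝ)^2 + (-1)*(b:ℝ) + (-1)*(b:ℝ)*(k:ℝ) + (b:ℝ)^2)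
        * ((-1/6)*(k:ℝ) + (-1/6)*(k:ℝ)^2 + (1/6)*(k:ℝ)^3 + (1/6)*(k:ℝ)^4 + (1/3)*(b:ℝ)
          + (1/6)*(b:ℝ)*(k:ℝ) + (-1/2)*(b:ℝ)*(k:ℝ)^2 + (-1/3)*(b:ℝ)*(k:ℝ)^3 + (-1/6)*(b:ℝ)^2
          + (1/2)*(b:ℝ)^2*(k:ℝ) + (1/2)*(b:ℝ)^2*(k:ℝ)^2 + (-1/3)*(b:ℝ)^3 + (-1/3)*(b:ℝ)^3*(k:ℝ)
          + (1/6)*(b:ℝ)^4) := by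
    intro b hb
    have hb2 := (Finset.mem_Icc.1 hb).2
    have inner : ∀ a : ℕ,
        ∑ c ∈ Finset.Icc 1 k, ∑ d ∈ Finset.Icc 1 k,
          |(b:ℝ) - (a:ℝ)| * |(c:ℝ) - (b:ℝ)| * |(d:ℝ) - (c:ℝ)|
        = |(b:ℝ) - (a:ℝ)|
          * ((-1/6)*(k:ℝ) + (-1/6)*(k:ℝ)^2 + (1/6)*(k:ℝ)^3 + (1/6)*(k:ℝ)^4 + (1/3)*(b:ℝ)
            + (1/6)*(b:ℝ)*(k:ℝ) + (-1/2)*(b:ℝ)*(k:ℝ)^2 + (-1/3)*(b:ℝ)*(k:ℝ)^3 + (-1/6)*(b:ℝ)^2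
            + (1/2)*(b:ℝ)^2*(k:ℝ) + (1/2)*(b:ℝ)^2*(k:ℝ)^2 + (-1/3)*(b:ℝ)^3
            + (-1/3)*(b:ℝ)^3*(k:ℝ) + (1/6)*(b:ℝ)^4) := by
      intro a
      have step1 : ∀ c ∈ Finset.Icc 1 k,
          ∑ d ∈ Finset.Icc 1 k, |(b:ℝ) - (a:ℝ)| * |(c:ℝ) - (b:ℝ)| * |(d:ℝ) - (c:ℝ)|
          = |(b:ℝ) - (a:ℝ)| * (|(b:ℝ) - (c:ℝ)|
              * ((1/2)*(k:ℝ) + (1/2)*(k:ℝ)^2 + (-1)*(c:ℝ) + (-1)*(c:ℝ)*(k:ℝ) + (c:ℝ)^2)) := by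
        intro c hc
        have hc2 := (Finset.mem_Icc.1 hc).2
        rw [← Finset.mul_sum,
          Finset.sum_congr rfl (fun (d : ℕ) _ => abs_sub_comm ((d:ℝ)) ((c:ℝ))), L0 hc2,
          abs_sub_comm ((c:ℝ)) ((b:ℝ)), mul_assoc]
      rw [Finset.sum_congr rfl step1, ← Finset.mul_sum, LB hb2]
    rw [Finset.sum_congr rfl (fun a _ => inner a), ← Finset.sum_mul, L0 hb2]
  rw [Finset.sum_congr rfl key,
    Finset.sum_congr rfl (g := fun b : ℕ =>
      (((-1/12)*(k:ℝ)^2 + (-1/6)*(k:ℝ)^3 + (1/6)*(k:ℝ)^5 + (1/12)*(k:ℝ)^6)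
      + ((1/3)*(k:ℝ) + (7/12)*(k:ℝ)^2 + (-1/6)*(k:ℝ)^3 + (-3/4)*(k:ℝ)^4 + (-1/3)*(k:ℝ)^5)*(b:ℝ)
      + ((-1/3) + (-3/4)*(k:ℝ) + (1/3)*(k:ℝ)^2 + (3/2)*(k:ℝ)^3 + (3/4)*(k:ℝ)^4)*(b:ℝ)^2
      + ((1/2) + (-1/3)*(k:ℝ) + (-11/6)*(k:ℝ)^2 + (-1)*(k:ℝ)^3)*(b:ℝ)^3
      + ((1/6) + (5/4)*(k:ℝ) + (11/12)*(k:ℝ)^2)*(b:ℝ)^4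
      + ((-1/2) + (-1/2)*(k:ℝ))*(b:ℝ)^5
      + (1/6)*(b:ℝ)^6)) (fun b _ => by ring),
    sum_pow_Icc]
  ring
end SumPart

/-- The uniform probability measure on the integers `{1, ..., k}` (as a measure on `ℕ`). -/
noncomputable def unifMeasure (k : ℕ) : Measure ℕ :=
  (k : ℝ≥0∞)⁻¹ • ∑ i ∈ Finset.Icc 1 k, Measure.dirac i

lemma unif_singleton (k : ℕ) (n : ℕ) :
    unifMeasure k {n} = (k : ℝ≥0∞)⁻¹ * (if n ∈ Finset.Icc 1 k then 1 else 0) := by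
  rw [unifMeasure, Measure.smul_apply, Measure.finset_sum_apply, smul_eq_mul]
  congr 1
  rw [Finset.sum_congr rfl (fun i _ => Measure.dirac_apply' i (measurableSet_singleton n))]
  simp [Set.indicator_apply, Finset.sum_ite_eq']

theorem cross_moment_T0111_uniform
    {Ω : Type*} [MeasurableSpace Ω] (μ : Measure Ω) [IsProbabilityMeasure μ]
    (k : ℕ) (hk : 2 ≤ k) (x : Fin 4 → Ω → ℕ)
    (hmeas : ∀ i, Measurable (x i))
    (hdist : ∀ i, Measure.map (x i) μ = unifMeasure k)
    (hindep : iIndepFun x μ) :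
    ∫ ω, |(x 1 ω : ℝ) - (x 0 ω : ℝ)| * |(x 2 ω : ℝ) - (x 1 ω : ℝ)|
        * |(x 3 ω : ℝ) - (x 2 ω : ℝ)| ∂μ
      = ((k : ℝ) - 1) * ((k : ℝ) + 1)
          * (17 * (k : ℝ) ^ 4 - 39 * (k : ℝ) ^ 2 + 24) / (420 * (k : ℝ) ^ 3) := by
  classical
  have hk0 : (k : ℝ) ≠ 0 := by positivity
  set I := Finset.Icc 1 k with hI
  let F : ℕ × ℕ × ℕ × ℕ → ℝ := fun p =>
    |(p.2.1 : ℝ) - (p.1 : ℝ)| * |(p.2.2.1 : ℝ) - (p.2.1 : ℝ)| * |(p.2.2.2 : ℝ) - (p.2.2.1 : ℝ)|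
  let J : Ω → ℕ × ℕ × ℕ × ℕ := fun ω => (x 0 ω, x 1 ω, x 2 ω, x 3 ω)
  have hJ : Measurable J :=
    (hmeas 0).prodMk ((hmeas 1).prodMk ((hmeas 2).prodMk (hmeas 3)))
  have hFmeas : Measurable F := measurable_of_countable F
  have hsing : ∀ (i : Fin 4) (n : ℕ), μ (x i ⁻¹' {n}) = unifMeasure k {n} := by
    intro i n
    rw [← hdist i, Measure.map_apply (hmeas i) (measurableSet_singleton n)]
  have hmap : μ.map J = ((k : ℝ≥0∞)⁻¹)^4 • ∑ p ∈ I ×ˢ (I ×ˢ (I ×ˢ I)), Measure.dirac p := by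
    apply Measure.ext_of_singleton
    rintro ⟨a, b, c, d⟩
    rw [Measure.map_apply hJ (measurableSet_singleton _)]
    have hpre : J ⁻¹' {(a, b, c, d)} = ⋂ i : Fin 4, x i ⁻¹' {![a, b, c, d] i} := by
      ext ω
      simp only [J, Set.mem_preimage, Set.mem_singleton_iff, Prod.mk.injEq, Set.mem_iInter]
      constructor
      · rintro ⟨h0, h1, h2, h3⟩ i
        fin_cases i <;> simp [h0, h1, h2, h3]
      · intro h
        have h0 := h 0; have h1 := h 1; have h2 := h 2; have h3 := h 3
        simp only [Matrix.cons_val_zero, Matrix.cons_val_one, Matrix.head_cons,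
          Matrix.cons_val_two, Matrix.tail_cons, Matrix.cons_val_three] at h0 h1 h2 h3
        exact ⟨h0, h1, h2, h3⟩
    rw [hpre, hindep.meas_iInter (fun i => ⟨{![a, b, c, d] i}, measurableSet_singleton _, rfl⟩),
      Fin.prod_univ_four]
    simp only [Matrix.cons_val_zero, Matrix.cons_val_one, Matrix.head_cons,
      Matrix.cons_val_two, Matrix.tail_cons, Matrix.cons_val_three]
    rw [hsing, hsing, hsing, hsing, unif_singleton, unif_singleton, unif_singleton,
      unif_singleton, Measure.smul_apply, Measure.finset_sum_apply, smul_eq_mul,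
      Finset.sum_congr rfl (fun p _ => Measure.dirac_apply' p (measurableSet_singleton _))]
    simp only [Set.indicator_apply, Set.mem_singleton_iff, Pi.one_apply, Finset.sum_ite_eq',
      Finset.mem_product]
    by_cases ha : a ∈ I <;> by_cases hb : b ∈ I <;> by_cases hc : c ∈ I <;> by_cases hd : d ∈ I <;>
      simp only [hI, Finset.mem_Icc] at ha hb hc hd <;> simp [ha, hb, hc, hd, hI] <;> ring
  have hdirac_int : ∀ p : ℕ × ℕ × ℕ × ℕ, Integrable F (Measure.dirac p) := by
    intro p
    refine ⟨hFmeas.aestronglyMeasurable, ?_⟩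
    simp [HasFiniteIntegral, lintegral_dirac]
  have step1 : ∫ ω, |(x 1 ω : ℝ) - (x 0 ω : ℝ)| * |(x 2 ω : ℝ) - (x 1 ω : ℝ)|
        * |(x 3 ω : ℝ) - (x 2 ω : ℝ)| ∂μ = ∫ p, F p ∂(μ.map J) := by
    rw [integral_map hJ.aemeasurable hFmeas.aestronglyMeasurable]
  rw [step1, hmap, integral_smul_measure,
    integral_finset_sum_measure (fun p _ => hdirac_int p)]
  simp only [integral_dirac]
  rw [Finset.sum_product]
  simp only [Finset.sum_product]
  have : ∀ a b c d : ℕ, F (a, b, c, d)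
      = |(b : ℝ) - (a : ℝ)| * |(c : ℝ) - (b : ℝ)| * |(d : ℝ) - (c : ℝ)| := fun _ _ _ _ => rfl
  simp only [this]
  rw [hI, big_sum]
  have htr : (((k : ℝ≥0∞))⁻¹ ^ 4).toReal = ((k : ℝ))⁻¹ ^ 4 := by
    simp
  rw [htr, smul_eq_mul]
  field_simp
  ring
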